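/- arXiv:2012.04553 — 7 statements merged into one kernel-verified Lean document; each statement's English description precedes it below -/
import Mathlib

section
/- Let V and W be finite types, let p be a simple graph on V (the pattern), and let G be a simple graph on W (the data graph). Then the set of edge-induced matches of p in G equals the union of the set of vertex-induced matches of p in G together with, over all simple graphs q on V that are strict supergraphs of p (i.e. p < q in the edge-inclusion order), the sets { m ∘ f | m is a vertex-induced match of q in G and f is a subgraph isomorphism from p to q }. (Match Conversion Theorem.) -/
/-- The set of edge-induced matches of pattern `p` in data graph `G`:
injective maps preserving adjacency. -/
def EdgeInduced {V W : Type*} (p : SimpleGraph V) (G : SimpleGraph W) : Set (V → W) :=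
  {m | Function.Injective m ∧ ∀ u v, p.Adj u v → G.Adj (m u) (m v)}

/-- The set of vertex-induced matches of pattern `p` in data graph `G`:
injective maps reflecting adjacency exactly. -/
def VertexInduced {V W : Type*} (p : SimpleGraph V) (G : SimpleGraph W) : Set (V → W) :=
  {m | Function.Injective m ∧ ∀ u v, p.Adj u v ↔ G.Adj (m u) (m v)}

/-- The set `Φ(p,q)` of subgraph isomorphisms from `p` to `q`:
permutations of the vertex set mapping edges of `p` to edges of `q`. -/
def SubIso {V : Type*} (p q : SimpleGraph V) : Set (Equiv.Perm V) :=
  {f | ∀ u v, p.Adj u v → q.Adj (f u) (f v)}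

/-- `M ∘ F = { m ∘ f | m ∈ M, f ∈ F }`. -/
def CompSet {V W : Type*} (M : Set (V → W)) (F : Set (Equiv.Perm V)) : Set (V → W) :=
  {x | ∃ m ∈ M, ∃ f ∈ F, x = m ∘ f}

/-- The set `Aut(q)` of automorphisms of `q`. -/
def AutSet {V : Type*} (q : SimpleGraph V) : Set (Equiv.Perm V) :=
  {g | ∀ u v, q.Adj u v ↔ q.Adj (g u) (g v)}

/-- **Match Conversion Theorem.** The edge-induced matches of `p` in `G` are the
vertex-induced matches of `p` together with, over all strict supergraphs `q` of `p`,
the permuted vertex-induced matches of `q`. -/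
theorem match_conversion {V W : Type*} [Fintype V] [Fintype W]
    (p : SimpleGraph V) (G : SimpleGraph W) :
    EdgeInduced p G =
      VertexInduced p G ∪
        ⋃ q ∈ {q : SimpleGraph V | p < q}, CompSet (VertexInduced q G) (SubIso p q) := by
  ext m
  constructor
  · rintro ⟨hinj, hadj⟩
    set q : SimpleGraph V :=
      { Adj := fun u v => G.Adj (m u) (m v)
        symm := ⟨fun u v h => h.symm⟩
        loopless := ⟨fun u h => G.loopless.irrefl _ h⟩ } with hq
    have hmq : m ∈ VertexInduced q G := ⟨hinj, fun u v => Iff.rfl⟩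
    have hle : p ≤ q := fun u v h => hadj u v h
    rcases eq_or_lt_of_le hle with heq | hlt
    · left
      exact ⟨hinj, fun u v => heq ▸ Iff.rfl⟩
    · right
      refine Set.mem_biUnion hlt ⟨m, hmq, Equiv.refl V, ?_, rfl⟩
      intro u v h
      exact hle h
  · rintro (⟨hinj, hadj⟩ | h)
    · exact ⟨hinj, fun u v h => (hadj u v).1 h⟩
    · simp only [Set.mem_iUnion] at h
      rcases h with ⟨q, hpq, m', ⟨hinj, hadj⟩, f, hf, rfl⟩
      exact ⟨hinj.comp f.injective, fun u v h => (hadj _ _).1 (hf u v h)⟩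
end

section
/- Let V and W be finite types, let p be a simple graph on V, and let G be a simple graph on W. Then the set of vertex-induced matches of p in G equals the set of edge-induced matches of p in G minus the union, over all simple graphs q on V that are strict supergraphs of p, of the sets { m ∘ f | m is a vertex-induced match of q in G and f is a subgraph isomorphism from p to q }. (Corollary of the Match Conversion Theorem.) -/
/-- Corollary of the Match Conversion Theorem: the vertex-induced matches of `p` in `G`
are the edge-induced matches minus the permuted vertex-induced matches of all
strict supergraphs of `p`. -/
theorem match_conversion_vertex_induced {V W : Type*} [Fintype V] [Fintype W]
    (p : SimpleGraph V) (G : SimpleGraph W) :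
    VertexInduced p G =
      EdgeInduced p G \
        (⋃ q ∈ {q : SimpleGraph V | p < q}, CompSet (VertexInduced q G) (SubIso p q)) := by
  classical
  ext m
  simp only [Set.mem_diff, Set.mem_iUnion, Set.mem_setOf_eq, VertexInduced, EdgeInduced,
    CompSet, SubIso, not_exists]
  constructor
  · rintro ⟨hinj, hadj⟩
    refine ⟨⟨hinj, fun u v h => (hadj u v).1 h⟩, ?_⟩
    rintro q hq m' ⟨⟨hinj', hadj'⟩, f, hf, heq⟩
    subst heq
    have key : ∀ u v, q.Adj (f u) (f v) ↔ p.Adj u v := fun u v =>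
      (hadj' (f u) (f v)).trans (hadj u v).symm
    have iso : p ≃g q := ⟨f, fun {a b} => key a b⟩
    have hcard : p.edgeFinset.card = q.edgeFinset.card := by
      simpa using iso.card_edgeFinset_eq
    have hlt : p.edgeFinset.card < q.edgeFinset.card :=
      Finset.card_lt_card (SimpleGraph.edgeFinset_ssubset_edgeFinset.2 hq)
    omega
  · rintro ⟨⟨hinj, hadj⟩, hnot⟩
    refine ⟨hinj, fun u v => ⟨hadj u v, fun hG => ?_⟩⟩
    by_contra hp
    set q : SimpleGraph V :=
      { Adj := fun a b => G.Adj (m a) (m b)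
        symm := ⟨fun a b h => h.symm⟩
        loopless := ⟨fun a h => G.loopless.irrefl _ h⟩ }
    have hne : u ≠ v := fun h => G.loopless.irrefl _ (h ▸ hG)
    refine hnot q ⟨fun a b h => hadj a b h, fun h => hp (h u v hG)⟩ m
      ⟨⟨hinj, fun a b => Iff.rfl⟩, Equiv.refl V, fun a b h => hadj a b h, rfl⟩
end

section
/- Let V and W be finite types, let p be a simple graph on V, let G be a simple graph on W, let A be a commutative additive monoid, and let λ be any function from maps V → W to A (the per-match aggregation value). Then the aggregation of λ over all edge-induced matches of p in G equals the sum, over all simple graphs q on V with p ≤ q, of the aggregation of λ over all vertex-induced matches of q in G: Σ_{m ∈ M_E(p,G)} λ(m) = Σ_{q : SimpleGraph V, p ≤ q} Σ_{m ∈ M_V(q,G)} λ(m). (Aggregation Conversion Theorem, labeled form.) -/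
/-- **Aggregation Conversion Theorem (labeled form).** Aggregating any function `lam`
over the edge-induced matches of `p` equals summing, over all supergraphs `q` of `p`,
the aggregation of `lam` over the vertex-induced matches of `q`. -/
theorem aggregation_conversion {V W : Type*} [Fintype V] [Fintype W]
    (p : SimpleGraph V) (G : SimpleGraph W)
    {A : Type*} [AddCommMonoid A] (lam : (V → W) → A) :
    ∑ᶠ m ∈ EdgeInduced p G, lam m =
      ∑ᶠ q ∈ {q : SimpleGraph V | p ≤ q}, ∑ᶠ m ∈ VertexInduced q G, lam m := by
  have hU : EdgeInduced p G = ⋃ q ∈ {q : SimpleGraph V | p ≤ q}, VertexInduced q G := by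
    ext m
    simp only [Set.mem_iUnion, Set.mem_setOf_eq]
    constructor
    · rintro ⟨hinj, hadj⟩
      exact ⟨G.comap m, fun u v h => hadj u v h, hinj, fun u v => Iff.rfl⟩
    · rintro ⟨q, hpq, hinj, hiff⟩
      exact ⟨hinj, fun u v h => (hiff u v).mp (hpq h)⟩
  have hdisj : ({q : SimpleGraph V | p ≤ q}).PairwiseDisjoint
      (fun q => VertexInduced q G) := by
    intro q hq q' hq' hne
    refine Set.disjoint_left.mpr ?_
    rintro m ⟨_, h1⟩ ⟨_, h2⟩
    exact hne (SimpleGraph.ext (by ext u v; rw [h1 u v, h2 u v]))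
  rw [hU, finsum_mem_biUnion hdisj (Set.toFinite _) (fun q _ => Set.toFinite _)]
end

section
/- Let V and W be finite types, let p and q be simple graphs on V, and let G be a simple graph on W. Then |M_V(q,G)| · |Φ(p,q)| = |Aut(q)| · |M_V(q,G) ∘ Φ(p,q)|, where M_V(q,G) ∘ Φ(p,q) denotes the set { m ∘ f | m ∈ M_V(q,G), f ∈ Φ(p,q) }. In particular, the map (m, f) ↦ m ∘ f from M_V(q,G) × Φ(p,q) onto its image has all fibers of cardinality |Aut(q)| (when Φ(p,q) is nonempty). -/
theorem fiber_ncard {V W : Type*} [Fintype V] [Fintype W]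
    (p q : SimpleGraph V) (G : SimpleGraph W)
    {x : V → W} (hx : x ∈ CompSet (VertexInduced q G) (SubIso p q)) :
    {mf : (V → W) × Equiv.Perm V |
        mf.1 ∈ VertexInduced q G ∧ mf.2 ∈ SubIso p q ∧ mf.1 ∘ mf.2 = x}.ncard
      = (AutSet q).ncard := by
  obtain ⟨m₀, hm₀, f₀, hf₀, rfl⟩ := hx
  have hinj : Function.Injective (fun g : Equiv.Perm V => (m₀ ∘ ⇑g⁻¹, g * f₀)) := by
    intro g₁ g₂ h
    have := congrArg Prod.snd h
    simpa using this
  have hset : {mf : (V → W) × Equiv.Perm V |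
        mf.1 ∈ VertexInduced q G ∧ mf.2 ∈ SubIso p q ∧ mf.1 ∘ mf.2 = m₀ ∘ ⇑f₀}
      = (fun g : Equiv.Perm V => (m₀ ∘ ⇑g⁻¹, g * f₀)) '' AutSet q := by
    ext ⟨m, f⟩
    constructor
    · rintro ⟨hm, hf, hcomp⟩
      refine ⟨f * f₀⁻¹, ?_, ?_⟩
      · have key : ∀ v, m (f (f₀⁻¹ v)) = m₀ v := by
          intro v
          have := congrFun hcomp (f₀⁻¹ v)
          simpa using this
        intro u v
        calc q.Adj u v ↔ G.Adj (m₀ u) (m₀ v) := hm₀.2 u v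
          _ ↔ G.Adj (m (f (f₀⁻¹ u))) (m (f (f₀⁻¹ v))) := by rw [key, key]
          _ ↔ q.Adj ((f * f₀⁻¹) u) ((f * f₀⁻¹) v) := (hm.2 _ _).symm
      · have hmeq : m₀ ∘ ⇑(f * f₀⁻¹)⁻¹ = m := by
          funext v
          have h1 := congrFun hcomp (f⁻¹ v)
          simp only [Function.comp_apply, Equiv.apply_symm_apply] at h1
          simp only [mul_inv_rev, inv_inv, Equiv.Perm.coe_mul, Function.comp_apply]
          rw [← h1]
          simp
        have hfeq : (f * f₀⁻¹) * f₀ = f := by group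
        show (m₀ ∘ ⇑(f * f₀⁻¹)⁻¹, (f * f₀⁻¹) * f₀) = (m, f)
        rw [hmeq, hfeq]
    · rintro ⟨g, hg, hgeq⟩
      simp only [Prod.mk.injEq] at hgeq
      obtain ⟨rfl, rfl⟩ := hgeq
      refine ⟨⟨hm₀.1.comp g⁻¹.injective, fun u v => ?_⟩, fun u v h => ?_, ?_⟩
      · have h1 : q.Adj u v ↔ q.Adj (g⁻¹ u) (g⁻¹ v) := by
          have := hg (g⁻¹ u) (g⁻¹ v)
          simpa using this.symm
        exact h1.trans (hm₀.2 _ _)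
      · have := hf₀ u v h
        exact (hg _ _).1 this
      · funext v
        simp
  rw [hset, Set.ncard_image_of_injective _ hinj]

/-- Counting with multiplicity: `|M_V(q,G)| · |Φ(p,q)| = |Aut(q)| · |M_V(q,G) ∘ Φ(p,q)|`,
and (when `Φ(p,q)` is nonempty) every fiber of `(m, f) ↦ m ∘ f` over the image set
`M_V(q,G) ∘ Φ(p,q)` has cardinality `|Aut(q)|`. -/
theorem card_compSet_mul_aut {V W : Type*} [Fintype V] [Fintype W]
    (p q : SimpleGraph V) (G : SimpleGraph W) :
    (VertexInduced q G).ncard * (SubIso p q).ncard =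
        (AutSet q).ncard * (CompSet (VertexInduced q G) (SubIso p q)).ncard ∧
      ((SubIso p q).Nonempty →
        ∀ x ∈ CompSet (VertexInduced q G) (SubIso p q),
          {mf : (V → W) × Equiv.Perm V |
              mf.1 ∈ VertexInduced q G ∧ mf.2 ∈ SubIso p q ∧ mf.1 ∘ mf.2 = x}.ncard =
            (AutSet q).ncard) := by
  classical
  refine ⟨?_, fun _ x hx => fiber_ncard p q G hx⟩
  have hT : ((VertexInduced q G) ×ˢ (SubIso p q) :
      Set ((V → W) × Equiv.Perm V)).Finite := Set.toFinite _
  have hC : (CompSet (VertexInduced q G) (SubIso p q)).Finite := Set.toFinite _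
  have hmap : ∀ mf ∈ hT.toFinset,
      (fun mf : (V → W) × Equiv.Perm V => mf.1 ∘ ⇑mf.2) mf ∈ hC.toFinset := by
    intro mf hmf
    rw [Set.Finite.mem_toFinset] at hmf ⊢
    exact ⟨mf.1, hmf.1, mf.2, hmf.2, rfl⟩
  have hcard := Finset.card_eq_sum_card_fiberwise hmap
  have h1 : hT.toFinset.card = (VertexInduced q G).ncard * (SubIso p q).ncard := by
    rw [← Set.ncard_eq_toFinset_card _ hT, ← Nat.card_coe_set_eq,
      ← Nat.card_coe_set_eq, ← Nat.card_coe_set_eq,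
      Nat.card_congr (Equiv.Set.prod _ _), Nat.card_prod]
  have h2 : ∀ x ∈ hC.toFinset,
      (hT.toFinset.filter
        (fun mf : (V → W) × Equiv.Perm V => mf.1 ∘ ⇑mf.2 = x)).card
      = (AutSet q).ncard := by
    intro x hx
    rw [Set.Finite.mem_toFinset] at hx
    have hfs : ((hT.toFinset.filter
        (fun mf : (V → W) × Equiv.Perm V => mf.1 ∘ ⇑mf.2 = x)) : Set _)
        = {mf : (V → W) × Equiv.Perm V |
            mf.1 ∈ VertexInduced q G ∧ mf.2 ∈ SubIso p q ∧ mf.1 ∘ mf.2 = x} := by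
      ext mf
      simp only [Finset.coe_filter, Set.Finite.mem_toFinset, Set.mem_setOf_eq,
        Set.mem_prod]
      tauto
    rw [← fiber_ncard p q G hx, ← hfs, Set.ncard_coe_finset]
  rw [Finset.sum_congr rfl h2, Finset.sum_const, smul_eq_mul] at hcard
  rw [← h1, hcard, ← Set.ncard_eq_toFinset_card _ hC, mul_comm]
end

section
/- Let V and W be finite types, let p be a simple graph on V, and let G be a simple graph on W. Then, as integers, |M_V(p,G)| = Σ_{q : SimpleGraph V, p ≤ q} (−1)^{|E(q)| − |E(p)|} · |M_E(q,G)|, where |E(q)| denotes the number of edges of q. (This is the closed form of the recursive substitution that expresses the matches of a vertex-induced pattern in terms of matches of edge-induced patterns.) -/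
open Finset in
open scoped Classical in
lemma interval_sum_aux {V : Type*} [Fintype V] (p H : SimpleGraph V) :
    ∑ q ∈ Finset.univ.filter (fun q : SimpleGraph V => p ≤ q ∧ q ≤ H),
      (-1 : ℤ) ^ (q.edgeFinset.card - p.edgeFinset.card) = if H = p then 1 else 0 := by
  classical
  by_cases hpH : p ≤ H
  · have hbij : ∑ q ∈ Finset.univ.filter (fun q : SimpleGraph V => p ≤ q ∧ q ≤ H),
        (-1 : ℤ) ^ (q.edgeFinset.card - p.edgeFinset.card)
        = ∑ S ∈ (H.edgeFinset \ p.edgeFinset).powerset, (-1 : ℤ) ^ S.card := by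
      apply Finset.sum_nbij' (fun q => q.edgeFinset \ p.edgeFinset)
        (fun S => SimpleGraph.fromEdgeSet (p.edgeSet ∪ ↑S))
      · intro q hq
        simp only [Finset.mem_filter, Finset.mem_univ, true_and] at hq
        simp only [Finset.mem_powerset]
        exact Finset.sdiff_subset_sdiff (SimpleGraph.edgeFinset_subset_edgeFinset.2 hq.2)
          le_rfl
      · intro S hS
        simp only [Finset.mem_powerset] at hS
        simp only [Finset.mem_filter, Finset.mem_univ, true_and]
        constructor
        · conv_lhs => rw [← SimpleGraph.fromEdgeSet_edgeSet p]
          exact SimpleGraph.fromEdgeSet_mono (Set.subset_union_left)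
        · conv_rhs => rw [← SimpleGraph.fromEdgeSet_edgeSet H]
          apply SimpleGraph.fromEdgeSet_mono
          apply Set.union_subset (SimpleGraph.edgeSet_mono hpH)
          intro e he
          have := hS (by simpa using he)
          simp only [Finset.mem_sdiff, SimpleGraph.mem_edgeFinset] at this
          exact this.1
      · intro q hq
        simp only [Finset.mem_filter, Finset.mem_univ, true_and] at hq
        have : (p.edgeSet ∪ ↑(q.edgeFinset \ p.edgeFinset)) = q.edgeSet := by
          rw [Finset.coe_sdiff]
          simp only [SimpleGraph.coe_edgeFinset]
          rw [Set.union_diff_cancel (SimpleGraph.edgeSet_mono hq.1)]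
        rw [this, SimpleGraph.fromEdgeSet_edgeSet]
      · intro S hS
        simp only [Finset.mem_powerset] at hS
        have hnd : ∀ e ∈ p.edgeSet ∪ (↑S : Set (Sym2 V)), ¬ e.IsDiag := by
          intro e he
          rcases he with he | he
          · exact p.not_isDiag_of_mem_edgeSet he
          · have := hS (by simpa using he)
            simp only [Finset.mem_sdiff, SimpleGraph.mem_edgeFinset] at this
            exact H.not_isDiag_of_mem_edgeSet this.1
        have h1 : (SimpleGraph.fromEdgeSet (p.edgeSet ∪ ↑S)).edgeSet = p.edgeSet ∪ ↑S := by
          rw [SimpleGraph.edgeSet_fromEdgeSet]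
          ext e
          simp only [Set.mem_diff, Set.mem_setOf_eq, and_iff_left_iff_imp]
          exact fun he => hnd e he
        ext e
        simp only [Finset.mem_sdiff, SimpleGraph.mem_edgeFinset, h1, Set.mem_union,
          Finset.mem_coe]
        constructor
        · rintro ⟨he | he, hne⟩
          · exact absurd he hne
          · exact he
        · intro he
          have := hS he
          simp only [Finset.mem_sdiff, SimpleGraph.mem_edgeFinset] at this
          exact ⟨Or.inr he, this.2⟩
      · intro q hq
        simp only [Finset.mem_filter, Finset.mem_univ, true_and] at hq
        rw [Finset.card_sdiff_of_subset (SimpleGraph.edgeFinset_subset_edgeFinset.2 hq.1)]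
    rw [hbij, Finset.sum_powerset_neg_one_pow_card]
    by_cases h : H = p
    · rw [if_pos h, if_pos (by rw [h]; simp)]
    · rw [if_neg h, if_neg]
      rw [show ((H.edgeFinset \ p.edgeFinset = ∅)) = (H.edgeFinset ⊆ p.edgeFinset) from
        propext Finset.sdiff_eq_empty_iff_subset]
      intro hsub
      exact h (le_antisymm (by rwa [← SimpleGraph.edgeFinset_subset_edgeFinset]) hpH)
  · have h1 : Finset.univ.filter (fun q : SimpleGraph V => p ≤ q ∧ q ≤ H) = ∅ := by
      apply Finset.filter_false_of_mem
      rintro q - ⟨h1, h2⟩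
      exact hpH (h1.trans h2)
    rw [h1, Finset.sum_empty, if_neg (fun h => hpH (le_of_eq h.symm))]

/-- Inclusion–exclusion closed form: the number of vertex-induced matches of `p` in `G`
equals the alternating sum over supergraphs `q` of `p` of the numbers of edge-induced
matches of `q`, with sign given by the number of extra edges of `q`. -/
theorem card_vertexInduced_alternating_sum {V W : Type*} [Fintype V] [Fintype W]
    (p : SimpleGraph V) (G : SimpleGraph W) :
    ((VertexInduced p G).ncard : ℤ) =
      ∑ᶠ q ∈ {q : SimpleGraph V | p ≤ q},
        (-1 : ℤ) ^ (q.edgeSet.ncard - p.edgeSet.ncard) * (EdgeInduced q G).ncard := by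
  classical
  have hcard : ∀ q : SimpleGraph V, q.edgeSet.ncard = q.edgeFinset.card := fun q => by
    rw [← Set.ncard_coe_finset, SimpleGraph.coe_edgeFinset]
  have hfin : ({q : SimpleGraph V | p ≤ q}).Finite := Set.toFinite _
  rw [← Set.Finite.coe_toFinset hfin, finsum_mem_coe_finset]
  have hset : ∀ (s : Set (V → W)), ((s.ncard : ℤ)) = ∑ m : V → W, if m ∈ s then 1 else 0 := by
    intro s
    rw [Set.ncard_eq_toFinset_card']
    rw [show s.toFinset = Finset.univ.filter (· ∈ s) from by ext; simp]
    push_cast [Finset.card_filter]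
    simp
  rw [hset (VertexInduced p G)]
  have hswap : ∀ q ∈ hfin.toFinset,
      (-1:ℤ)^(q.edgeSet.ncard - p.edgeSet.ncard) * ((EdgeInduced q G).ncard : ℤ)
      = ∑ m : V → W, (-1:ℤ)^(q.edgeSet.ncard - p.edgeSet.ncard) *
          (if m ∈ EdgeInduced q G then 1 else 0) := by
    intro q _
    rw [hset (EdgeInduced q G), Finset.mul_sum]
  rw [Finset.sum_congr rfl hswap, Finset.sum_comm]
  apply Finset.sum_congr rfl
  intro m _
  set H : SimpleGraph V :=
    { Adj := fun u v => G.Adj (m u) (m v),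
      symm := ⟨fun u v h => G.adj_symm h⟩,
      loopless := ⟨fun u h => G.loopless.irrefl _ h⟩ } with hHdef
  by_cases hm : Function.Injective m
  · have hE : ∀ q : SimpleGraph V, (m ∈ EdgeInduced q G) ↔ q ≤ H := by
      intro q
      constructor
      · intro h u v huv
        exact h.2 u v huv
      · intro h
        exact ⟨hm, fun u v huv => h huv⟩
    have hV : (m ∈ VertexInduced p G) ↔ H = p := by
      constructor
      · intro h
        ext u v
        exact (h.2 u v).symm
      · intro h
        refine ⟨hm, fun u v => ?_⟩
        rw [← h]
    simp only [hE, hV]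
    have hfil : hfin.toFinset = Finset.univ.filter (fun q : SimpleGraph V => p ≤ q) := by
      ext q
      simp
    rw [hfil]
    simp_rw [mul_ite, mul_one, mul_zero]
    rw [← Finset.sum_filter, Finset.filter_filter]
    simp_rw [hcard]
    exact (interval_sum_aux p H).symm
  · rw [if_neg (fun h => hm h.1)]
    refine (Finset.sum_eq_zero ?_).symm
    intro q _
    rw [if_neg (fun h => hm h.1), mul_zero]
end

section
/- Let V and W be finite types, let p and q be simple graphs on V, let G be a simple graph on W, let A be a commutative additive monoid, and let λ be any function from maps V → W to A. Then |Aut(q)| • (Σ_{x ∈ M_V(q,G) ∘ Φ(p,q)} λ(x)) = Σ_{f ∈ Φ(p,q)} Σ_{m ∈ M_V(q,G)} λ(m ∘ f), where M_V(q,G) ∘ Φ(p,q) denotes the set { m ∘ f | m ∈ M_V(q,G), f ∈ Φ(p,q) } and • denotes natural-number scalar multiplication in A. (Corrected form of the identity a(M(q^V) ∘ φ(p,q)) = ⊕_{f ∈ φ(p,q)} a(M(q^V)) ∘* f used in the Aggregation Conversion Theorem.) -/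
/-- Corrected aggregation identity over the composed match set:
`|Aut(q)| • a(M_V(q,G) ∘ Φ(p,q)) = ⊕_{f ∈ Φ(p,q)} ⊕_{m ∈ M_V(q,G)} lam (m ∘ f)`. -/
theorem aggregation_compSet {V W : Type*} [Fintype V] [Fintype W]
    (p q : SimpleGraph V) (G : SimpleGraph W)
    {A : Type*} [AddCommMonoid A] (lam : (V → W) → A) :
    (AutSet q).ncard • (∑ᶠ x ∈ CompSet (VertexInduced q G) (SubIso p q), lam x) =
      ∑ᶠ f ∈ SubIso p q, ∑ᶠ m ∈ VertexInduced q G, lam (m ∘ f) := by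
  classical
  have hΦ : (SubIso p q).Finite := Set.toFinite _
  have hM : (VertexInduced q G).Finite := Set.toFinite _
  have hC : (CompSet (VertexInduced q G) (SubIso p q)).Finite := Set.toFinite _
  have hA : (AutSet q).Finite := Set.toFinite _
  set Φ := hΦ.toFinset with hΦdef
  set M := hM.toFinset with hMdef
  set C := hC.toFinset with hCdef
  -- rewrite all finsums as finset sums
  rw [finsum_mem_eq_finite_toFinset_sum _ hC, finsum_mem_eq_finite_toFinset_sum _ hΦ]
  have hinner : ∀ f : Equiv.Perm V,
      (∑ᶠ m ∈ VertexInduced q G, lam (m ∘ f)) = ∑ m ∈ M, lam (m ∘ f) := by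
    intro f
    exact finsum_mem_eq_finite_toFinset_sum _ hM
  simp only [hinner]
  -- RHS as a sum over a product
  rw [← Finset.sum_product' (s := Φ) (t := M) (f := fun f m => lam (m ∘ f))]
  -- fiberwise
  have hmaps : ∀ pr ∈ Φ ×ˢ M, (pr.2 ∘ ⇑pr.1 : V → W) ∈ C := by
    rintro ⟨f, m⟩ hpr
    rw [Finset.mem_product] at hpr
    rw [hCdef, Set.Finite.mem_toFinset]
    exact ⟨m, hM.mem_toFinset.mp hpr.2, f, hΦ.mem_toFinset.mp hpr.1, rfl⟩
  rw [← Finset.sum_fiberwise_of_maps_to hmaps (fun pr => lam (pr.2 ∘ ⇑pr.1))]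
  rw [Finset.smul_sum]
  refine Finset.sum_congr rfl ?_
  intro x hx
  have hxC : x ∈ CompSet (VertexInduced q G) (SubIso p q) := hC.mem_toFinset.mp hx
  obtain ⟨m₀, hm₀, f₀, hf₀, hxeq⟩ := hxC
  -- inner sum is constant lam x on the fiber
  have hconst : ∀ pr ∈ (Φ ×ˢ M).filter (fun pr : Equiv.Perm V × (V → W) => (pr.2 ∘ ⇑pr.1 : V → W) = x),
      lam (pr.2 ∘ ⇑pr.1) = lam x := by
    intro pr hpr
    rw [Finset.mem_filter] at hpr
    rw [hpr.2]
  rw [Finset.sum_congr rfl hconst, Finset.sum_const]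
  congr 1
  -- card of fiber = ncard of AutSet
  rw [Set.ncard_eq_toFinset_card _ hA]
  refine (Finset.card_bij (fun (g : Equiv.Perm V) (_ : g ∈ hA.toFinset) =>
      ((g * f₀ : Equiv.Perm V), (m₀ ∘ ⇑g⁻¹ : V → W))) ?_ ?_ ?_)
  · -- maps to fiber
    intro g hg
    have hgA : g ∈ AutSet q := hA.mem_toFinset.mp hg
    rw [Finset.mem_filter, Finset.mem_product]
    refine ⟨⟨?_, ?_⟩, ?_⟩
    · rw [hΦdef, Set.Finite.mem_toFinset]
      intro u v huv
      have := hf₀ u v huv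
      simpa [Equiv.Perm.mul_apply] using (hgA (f₀ u) (f₀ v)).mp this
    · rw [hMdef, Set.Finite.mem_toFinset]
      refine ⟨hm₀.1.comp g⁻¹.injective, ?_⟩
      intro u v
      have h1 := hgA (g⁻¹ u) (g⁻¹ v)
      have h2 := hm₀.2 (g⁻¹ u) (g⁻¹ v)
      simp only [Equiv.Perm.coe_inv, Equiv.apply_symm_apply] at h1
      simpa [Function.comp] using h1.symm.trans h2
    · funext u
      simp [hxeq, Equiv.Perm.mul_apply, Function.comp]
  · -- injective
    intro g₁ h₁ g₂ h₂ heq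
    have : g₁ * f₀ = g₂ * f₀ := congrArg Prod.fst heq
    exact mul_right_cancel this
  · -- surjective
    rintro ⟨f, m⟩ hpr
    rw [Finset.mem_filter, Finset.mem_product] at hpr
    obtain ⟨⟨hfΦ, hmM⟩, heq⟩ := hpr
    have hf : f ∈ SubIso p q := hΦ.mem_toFinset.mp hfΦ
    have hm : m ∈ VertexInduced q G := hM.mem_toFinset.mp hmM
    refine ⟨f * f₀⁻¹, ?_, ?_⟩
    · rw [Set.Finite.mem_toFinset]
      have hm₀m : ∀ u, m₀ u = m ((f * f₀⁻¹) u) := by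
        intro u
        have h1 : (m ∘ ⇑f) (f₀⁻¹ u) = (m₀ ∘ ⇑f₀) (f₀⁻¹ u) := by rw [heq, hxeq]
        simpa [Equiv.Perm.mul_apply, Function.comp] using h1.symm
      intro u v
      calc q.Adj u v ↔ G.Adj (m₀ u) (m₀ v) := hm₀.2 u v
        _ ↔ G.Adj (m ((f * f₀⁻¹) u)) (m ((f * f₀⁻¹) v)) := by rw [hm₀m u, hm₀m v]
        _ ↔ q.Adj ((f * f₀⁻¹) u) ((f * f₀⁻¹) v) := (hm.2 _ _).symm
    · refine Prod.ext ?_ ?_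
      · simp [mul_assoc]
      · show m₀ ∘ ⇑(f * f₀⁻¹)⁻¹ = m
        funext u
        have h1 : (m₀ ∘ ⇑f₀) (f⁻¹ u) = (m ∘ ⇑f) (f⁻¹ u) := by rw [← hxeq, ← heq]
        simp only [Function.comp, Equiv.Perm.coe_inv, Equiv.apply_symm_apply] at h1
        simpa [mul_inv_rev, Equiv.Perm.mul_apply, Function.comp] using h1
end

section
/- Let W be a finite type and let G be a simple graph on W. Let C4 be the 4-cycle on Fin 4 (i is adjacent to j if and only if j = i + 1 mod 4 or i = j + 1 mod 4), let D1 be C4 with the additional edge {0,2}, let D2 be C4 with the additional edge {1,3}, and let K4 be the complete graph on Fin 4. Then |M_E(C4,G)| = |M_V(C4,G)| + |M_V(D1,G)| + |M_V(D2,G)| + |M_V(K4,G)|. (Labeled form of the equation morphing the edge-induced 4-cycle into the vertex-induced 4-cycle, the vertex-induced chordal 4-cycle, and the 4-clique.) -/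
/-- The 4-cycle on `Fin 4`: `i` is adjacent to `j` iff `j = i + 1` or `i = j + 1` (mod 4). -/
def C4 : SimpleGraph (Fin 4) where
  Adj i j := j = i + 1 ∨ i = j + 1
  symm := by
    constructor
    intro i j h
    tauto
  loopless := by
    constructor
    intro i h
    rcases h with h | h <;> exact absurd h.symm (by omega)

/-- The chordal 4-cycle obtained from `C4` by adding the edge `{0, 2}`. -/
def D1 : SimpleGraph (Fin 4) := C4 ⊔ SimpleGraph.fromEdgeSet {s(0, 2)}

/-- The chordal 4-cycle obtained from `C4` by adding the edge `{1, 3}`. -/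
def D2 : SimpleGraph (Fin 4) := C4 ⊔ SimpleGraph.fromEdgeSet {s(1, 3)}

instance : DecidableRel C4.Adj := fun i j =>
  inferInstanceAs (Decidable (j = i + 1 ∨ i = j + 1))

lemma C4_adj (u v : Fin 4) : C4.Adj u v ↔ (v = u + 1 ∨ u = v + 1) := Iff.rfl

lemma D1_adj (u v : Fin 4) : D1.Adj u v ↔ C4.Adj u v ∨ (s(u,v) = s(0,2) ∧ u ≠ v) := by
  simp [D1, SimpleGraph.fromEdgeSet_adj]

lemma D2_adj (u v : Fin 4) : D2.Adj u v ↔ C4.Adj u v ∨ (s(u,v) = s(1,3) ∧ u ≠ v) := by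
  simp [D2, SimpleGraph.fromEdgeSet_adj]

instance : DecidableRel D1.Adj := fun i j => decidable_of_iff _ (D1_adj i j).symm
instance : DecidableRel D2.Adj := fun i j => decidable_of_iff _ (D2_adj i j).symm

lemma vi_disjoint {V W : Type*} {p q : SimpleGraph V} (G : SimpleGraph W)
    (h : p ≠ q) : Disjoint (VertexInduced p G) (VertexInduced q G) := by
  rw [Set.disjoint_left]
  rintro m ⟨_, hp⟩ ⟨_, hq⟩
  exact h (SimpleGraph.ext (by ext u v; rw [hp u v, hq u v]))

lemma edge_eq_union {W : Type*} (G : SimpleGraph W) :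
    EdgeInduced C4 G =
      VertexInduced C4 G ∪ VertexInduced D1 G ∪ VertexInduced D2 G ∪
        VertexInduced (⊤ : SimpleGraph (Fin 4)) G := by
  ext m
  constructor
  · rintro ⟨hinj, hadj⟩
    have h01 : G.Adj (m 0) (m 1) := hadj 0 1 (by decide)
    have h12 : G.Adj (m 1) (m 2) := hadj 1 2 (by decide)
    have h23 : G.Adj (m 2) (m 3) := hadj 2 3 (by decide)
    have h30 : G.Adj (m 3) (m 0) := hadj 3 0 (by decide)
    have h10 := h01.symm
    have h21 := h12.symm
    have h32 := h23.symm
    have h03 := h30.symm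
    by_cases h02 : G.Adj (m 0) (m 2) <;> by_cases h13 : G.Adj (m 1) (m 3)
    · right
      refine ⟨hinj, fun u v => ?_⟩
      have h20 := h02.symm
      have h31 := h13.symm
      fin_cases u <;> fin_cases v <;> constructor <;> intro h <;>
        first
          | assumption
          | exact (G.irrefl h).elim
          | exact absurd h (by decide)
          | decide
    · left; left; right
      refine ⟨hinj, fun u v => ?_⟩
      have h20 := h02.symm
      have h31 : ¬ G.Adj (m 3) (m 1) := fun h => h13 h.symm
      fin_cases u <;> fin_cases v <;> constructor <;> intro h <;>
        first
          | assumption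
          | exact (G.irrefl h).elim
          | exact (h13 h).elim
          | exact (h31 h).elim
          | exact absurd h (by decide)
          | decide
    · left; right
      refine ⟨hinj, fun u v => ?_⟩
      have h31 := h13.symm
      have h20 : ¬ G.Adj (m 2) (m 0) := fun h => h02 h.symm
      fin_cases u <;> fin_cases v <;> constructor <;> intro h <;>
        first
          | assumption
          | exact (G.irrefl h).elim
          | exact (h02 h).elim
          | exact (h20 h).elim
          | exact absurd h (by decide)
          | decide
    · left; left; left
      refine ⟨hinj, fun u v => ?_⟩
      have h20 : ¬ G.Adj (m 2) (m 0) := fun h => h02 h.symm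
      have h31 : ¬ G.Adj (m 3) (m 1) := fun h => h13 h.symm
      fin_cases u <;> fin_cases v <;> constructor <;> intro h <;>
        first
          | assumption
          | exact (G.irrefl h).elim
          | exact (h02 h).elim
          | exact (h20 h).elim
          | exact (h13 h).elim
          | exact (h31 h).elim
          | exact absurd h (by decide)
          | decide
  · rintro (((⟨hinj, h⟩ | ⟨hinj, h⟩) | ⟨hinj, h⟩) | ⟨hinj, h⟩) <;>
      refine ⟨hinj, fun u v huv => (h u v).mp ?_⟩
    · exact huv
    · exact (D1_adj u v).mpr (Or.inl huv)
    · exact (D2_adj u v).mpr (Or.inl huv)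
    · exact huv.ne

/-- Morphing equation for the edge-induced 4-cycle: its match count is the sum of the
vertex-induced match counts of the 4-cycle, the two chordal 4-cycles, and the 4-clique. -/
theorem edgeInduced_fourCycle_count {W : Type*} [Fintype W] (G : SimpleGraph W) :
    (EdgeInduced C4 G).ncard =
      (VertexInduced C4 G).ncard + (VertexInduced D1 G).ncard +
        (VertexInduced D2 G).ncard + (VertexInduced (⊤ : SimpleGraph (Fin 4)) G).ncard := by
  have hCD1 : C4 ≠ D1 := fun h =>
    absurd (h ▸ (show D1.Adj 0 2 by decide)) (by decide)
  have hCD2 : C4 ≠ D2 := fun h =>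
    absurd (h ▸ (show D2.Adj 1 3 by decide)) (by decide)
  have hCT : C4 ≠ (⊤ : SimpleGraph (Fin 4)) := fun h =>
    absurd (h ▸ (show ((⊤ : SimpleGraph (Fin 4))).Adj 0 2 by decide)) (by decide)
  have hD12 : D1 ≠ D2 := fun h =>
    absurd (h ▸ (show D2.Adj 1 3 by decide)) (by decide)
  have hD1T : D1 ≠ (⊤ : SimpleGraph (Fin 4)) := fun h =>
    absurd (h ▸ (show ((⊤ : SimpleGraph (Fin 4))).Adj 1 3 by decide)) (by decide)
  have hD2T : D2 ≠ (⊤ : SimpleGraph (Fin 4)) := fun h =>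
    absurd (h ▸ (show ((⊤ : SimpleGraph (Fin 4))).Adj 0 2 by decide)) (by decide)
  rw [edge_eq_union]
  rw [Set.ncard_union_eq (by
      refine Set.disjoint_union_left.mpr ⟨Set.disjoint_union_left.mpr ⟨?_, ?_⟩, ?_⟩
      exacts [vi_disjoint G hCT, vi_disjoint G hD1T, vi_disjoint G hD2T])
    (Set.toFinite _) (Set.toFinite _)]
  rw [Set.ncard_union_eq (Set.disjoint_union_left.mpr ⟨vi_disjoint G hCD2, vi_disjoint G hD12⟩)
    (Set.toFinite _) (Set.toFinite _)]
  rw [Set.ncard_union_eq (vi_disjoint G hCD1) (Set.toFinite _) (Set.toFinite _)]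
end
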